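/- (Symmetric Hamiltonian case.) Assume λ_{1,0} = λ_{2,0} = λ_{4,0} = λ_{5,0} = 0 and λ_{3,0} ≠ λ_{6,0}. Then v̄_{1,1} = λ_{1,1}, v̄_{3,1} = (λ_{3,0} − λ_{6,0}) λ_{5,1}, and v̄_{5,1} = v̄_{7,1} = 0. If moreover λ_{1,1} = λ_{5,1} = 0, then v̄_{1,2} = λ_{1,2}, v̄_{3,2} = (λ_{3,0} − λ_{6,0}) λ_{5,2}, v̄_{5,2} = 5(λ_{3,0} − λ_{6,0})² λ_{2,1} λ_{4,1}, and v̄_{7,2} = (λ_{3,0} − λ_{6,0})²(λ_{3,0}λ_{6,0}−2λ_{6,0}²) λ_{2,1} λ_{4,1}. Furthermore, for every integer k ≥ 2, if v̄_{5,j} = 0 for all 0 ≤ j ≤ k−1, then there exists an index i with 1 ≤ i ≤ k−1 such that v̄_{5,k} = 5(λ_{3,0} − λ_{6,0})² λ_{2,i} λ_{4,k−i} and v̄_{7,k} = (λ_{3,0} − λ_{6,0})²(λ_{3,0}λ_{6,0}−2λ_{6,0}²) λ_{2,i} λ_{4,k−i}. -/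

import Mathlib

open PowerSeries

private lemma coeff_mul_single (f g : PowerSeries ℝ) (m n : ℕ)
    (hf : ∀ a < m, coeff a f = 0) (hg : ∀ b < n, coeff b g = 0) :
    coeff (m + n) (f * g) = coeff m f * coeff n g := by
  rw [PowerSeries.coeff_mul]
  apply Finset.sum_eq_single (m, n)
  · rintro ⟨a, b⟩ hab hne
    simp only [Finset.HasAntidiagonal.mem_antidiagonal] at hab
    rcases lt_trichotomy a m with h | h | h
    · rw [hf a h, zero_mul]
    · exfalso; apply hne; subst h
      have : b = n := by omega
      subst this; rfl
    · have : b < n := by omega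
      rw [hg b this, mul_zero]
  · intro h
    simp [Finset.mem_antidiagonal] at h

private lemma coeff_P_zero (P u : PowerSeries ℝ) (hu : coeff 0 u ≠ 0) (k : ℕ)
    (h : ∀ j < k, coeff j (P * u) = 0) :
    ∀ j < k, coeff j P = 0 := by
  intro j
  induction j using Nat.strong_induction_on with
  | _ j IH =>
    intro hj
    have h1 : ∀ m < j, coeff m P = 0 := fun m hm => IH m hm (hm.trans hj)
    have h2 : coeff (j + 0) (P * u) = coeff j P * coeff 0 u :=
      coeff_mul_single P u j 0 h1 (by omega)
    rw [Nat.add_zero, h j hj] at h2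
    exact (mul_eq_zero.mp h2.symm).resolve_right hu

private lemma coeff_mul_eq_zero (f g : PowerSeries ℝ) (k : ℕ)
    (h : ∀ a b : ℕ, a + b = k → coeff a f * coeff b g = 0) :
    coeff k (f * g) = 0 := by
  rw [PowerSeries.coeff_mul]
  apply Finset.sum_eq_zero
  rintro ⟨a, b⟩ hab
  exact h a b (Finset.HasAntidiagonal.mem_antidiagonal.mp hab)

private lemma exists_single (f g : PowerSeries ℝ)
    (hf0 : coeff 0 f = 0) (hg0 : coeff 0 g = 0)
    (k : ℕ) (hk : 2 ≤ k) (h : ∀ j < k, coeff j (f * g) = 0) :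
    ∃ i, 1 ≤ i ∧ i ≤ k - 1 ∧ coeff k (f * g) = coeff i f * coeff (k - i) g := by
  by_cases hA : ∃ i, i ≤ k - 1 ∧ coeff i f ≠ 0
  · -- minimal such m
    have hA' : ∃ i, coeff i f ≠ 0 := hA.imp fun i hi => hi.2
    set m := Nat.find hA' with hm
    have hmne : coeff m f ≠ 0 := Nat.find_spec hA'
    have hmmin : ∀ a < m, coeff a f = 0 := fun a ha =>
      not_not.mp (Nat.find_min hA' ha)
    obtain ⟨i0, hi0le, hi0⟩ := hA
    have hmle : m ≤ k - 1 := le_trans (Nat.find_le hi0) hi0le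
    have hm1 : 1 ≤ m := by
      rcases Nat.eq_zero_or_pos m with h0 | h0
      · rw [h0] at hmne; exact absurd hf0 hmne
      · exact h0
    by_cases hB : ∃ j, j ≤ k - m ∧ coeff j g ≠ 0
    · have hB' : ∃ j, coeff j g ≠ 0 := hB.imp fun j hj => hj.2
      set n := Nat.find hB' with hn
      have hnne : coeff n g ≠ 0 := Nat.find_spec hB'
      have hnmin : ∀ b < n, coeff b g = 0 := fun b hb =>
        not_not.mp (Nat.find_min hB' hb)
      obtain ⟨j0, hj0le, hj0⟩ := hB
      have hnle : n ≤ k - m := le_trans (Nat.find_le hj0) hj0le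
      have hmn : coeff (m + n) (f * g) = coeff m f * coeff n g :=
        coeff_mul_single f g m n hmmin hnmin
      have hmnk : m + n = k := by
        by_contra hne
        have hlt : m + n < k := by omega
        rw [h (m + n) hlt] at hmn
        exact mul_ne_zero hmne hnne hmn.symm
      refine ⟨m, hm1, hmle, ?_⟩
      have hkm : k - m = n := by omega
      rw [hkm, ← hmnk, hmn]
    · push_neg at hB
      refine ⟨m, hm1, hmle, ?_⟩
      have hz : coeff k (f * g) = 0 := by
        apply coeff_mul_eq_zero
        intro a b hab
        rcases lt_or_ge a m with h1 | h1
        · rw [hmmin a h1, zero_mul]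
        · rw [hB b (by omega), mul_zero]
      rw [hz, hB (k - m) le_rfl, mul_zero]
  · push_neg at hA
    refine ⟨1, le_rfl, by omega, ?_⟩
    have hz : coeff k (f * g) = 0 := by
      apply coeff_mul_eq_zero
      intro a b hab
      rcases Nat.lt_or_ge a k with h1 | h1
      · rw [hA a (by omega), zero_mul]
      · have : b = 0 := by omega
        rw [this, hg0, mul_zero]
    rw [hz, hA 1 (by omega), zero_mul]

private lemma coeff_one_mul' (f g : PowerSeries ℝ) :
    coeff 1 (f * g) = coeff 0 f * coeff 1 g + coeff 1 f * coeff 0 g := by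
  rw [PowerSeries.coeff_mul, Finset.Nat.sum_antidiagonal_eq_sum_range_succ_mk]
  simp [Finset.sum_range_succ]

private lemma coeff_two_mul' (f g : PowerSeries ℝ) :
    coeff 2 (f * g) = coeff 0 f * coeff 2 g + coeff 1 f * coeff 1 g
      + coeff 2 f * coeff 0 g := by
  rw [PowerSeries.coeff_mul, Finset.Nat.sum_antidiagonal_eq_sum_range_succ_mk]
  simp [Finset.sum_range_succ]

private lemma coeff_zero_mul' (f g : PowerSeries ℝ) :
    coeff 0 (f * g) = coeff 0 f * coeff 0 g := by
  simp [coeff_zero_eq_constantCoeff, map_mul]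

/-- Symmetric Hamiltonian case. -/
theorem symmetric_hamiltonian
    (l1 l2 l3 l4 l5 l6 : PowerSeries ℝ)
    (v1 v3 v5 v7 : PowerSeries ℝ)
    (hv1 : v1 = l1)
    (hv3 : v3 = l5 * (l3 - l6))
    (hv5 : v5 = l2 * l4 * (l3 - l6) * (l4 + 5 * l3 - 5 * l6))
    (hv7 : v7 = l2 * l4 * (l3 - l6) ^ 2 * (l3 * l6 - 2 * l6 ^ 2 - l2 ^ 2))
    (h10 : coeff 0 l1 = 0)
    (h20 : coeff 0 l2 = 0)
    (h40 : coeff 0 l4 = 0)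
    (h50 : coeff 0 l5 = 0)
    (h36 : coeff 0 l3 ≠ coeff 0 l6) :
    coeff 1 v1 = coeff 1 l1 ∧
    coeff 1 v3 = (coeff 0 l3 - coeff 0 l6) * coeff 1 l5 ∧
    coeff 1 v5 = 0 ∧ coeff 1 v7 = 0 ∧
    (coeff 1 l1 = 0 → coeff 1 l5 = 0 →
      coeff 2 v1 = coeff 2 l1 ∧
      coeff 2 v3 = (coeff 0 l3 - coeff 0 l6) * coeff 2 l5 ∧
      coeff 2 v5 = 5 * (coeff 0 l3 - coeff 0 l6) ^ 2 * coeff 1 l2 * coeff 1 l4 ∧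
      coeff 2 v7 = (coeff 0 l3 - coeff 0 l6) ^ 2
        * (coeff 0 l3 * coeff 0 l6 - 2 * (coeff 0 l6) ^ 2) * coeff 1 l2 * coeff 1 l4) ∧
    (∀ k : ℕ, 2 ≤ k → (∀ j < k, coeff j v5 = 0) →
      ∃ i : ℕ, 1 ≤ i ∧ i ≤ k - 1 ∧
        coeff k v5 = 5 * (coeff 0 l3 - coeff 0 l6) ^ 2 * coeff i l2 * coeff (k - i) l4 ∧
        coeff k v7 = (coeff 0 l3 - coeff 0 l6) ^ 2
          * (coeff 0 l3 * coeff 0 l6 - 2 * (coeff 0 l6) ^ 2) * coeff i l2 * coeff (k - i) l4) := by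
  set u : PowerSeries ℝ := (l3 - l6) * (l4 + 5 * l3 - 5 * l6) with hu
  set w : PowerSeries ℝ := (l3 - l6) ^ 2 * (l3 * l6 - 2 * l6 ^ 2 - l2 ^ 2) with hw
  have hv5' : v5 = (l2 * l4) * u := by rw [hv5, hu]; ring
  have hv7' : v7 = (l2 * l4) * w := by rw [hv7, hw]; ring
  -- constant coefficients
  have h20' : constantCoeff l2 = 0 := by rwa [← coeff_zero_eq_constantCoeff_apply]
  have h40' : constantCoeff l4 = 0 := by rwa [← coeff_zero_eq_constantCoeff_apply]
  have hu0 : coeff 0 u = 5 * (coeff 0 l3 - coeff 0 l6) ^ 2 := by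
    simp only [hu, coeff_zero_eq_constantCoeff_apply, map_mul, map_sub, map_add, map_ofNat,
      h40', map_pow]
    ring
  have hw0 : coeff 0 w = (coeff 0 l3 - coeff 0 l6) ^ 2
      * (coeff 0 l3 * coeff 0 l6 - 2 * (coeff 0 l6) ^ 2) := by
    simp only [hw, coeff_zero_eq_constantCoeff_apply, map_mul, map_sub, map_pow, map_ofNat, h20']
    ring
  have hP0 : coeff 0 (l2 * l4) = 0 := by rw [coeff_zero_mul', h20, zero_mul]
  have hP1 : coeff 1 (l2 * l4) = 0 := by rw [coeff_one_mul', h20, h40]; ring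
  have hP2 : coeff 2 (l2 * l4) = coeff 1 l2 * coeff 1 l4 := by
    rw [coeff_two_mul', h20, h40]; ring
  have a0ne : coeff 0 l3 - coeff 0 l6 ≠ 0 := sub_ne_zero.mpr h36
  refine ⟨by rw [hv1], ?_, ?_, ?_, ?_, ?_⟩
  · rw [hv3, coeff_one_mul', h50, (coeff (R := ℝ) 0).map_sub]; ring
  · rw [hv5', coeff_one_mul', hP0, hP1]; ring
  · rw [hv7', coeff_one_mul', hP0, hP1]; ring
  · intro h11 h51
    refine ⟨by rw [hv1], ?_, ?_, ?_⟩
    · rw [hv3, coeff_two_mul', h50, h51, (coeff (R := ℝ) 0).map_sub]; ring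
    · rw [hv5', coeff_two_mul', hP0, hP1, hP2, hu0]; ring
    · rw [hv7', coeff_two_mul', hP0, hP1, hP2, hw0]; ring
  · intro k hk hzero
    have hu0ne : coeff 0 u ≠ 0 := by
      rw [hu0]
      exact mul_ne_zero (by norm_num) (pow_ne_zero _ a0ne)
    have hz' : ∀ j < k, coeff j ((l2 * l4) * u) = 0 := by
      intro j hj; rw [← hv5']; exact hzero j hj
    have hPz : ∀ j < k, coeff j (l2 * l4) = 0 := coeff_P_zero _ u hu0ne k hz'
    obtain ⟨i, hi1, hik, hival⟩ := exists_single l2 l4 h20 h40 k hk hPz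
    refine ⟨i, hi1, hik, ?_, ?_⟩
    · have := coeff_mul_single (l2 * l4) u k 0 hPz (by omega)
      rw [Nat.add_zero] at this
      rw [hv5', this, hival, hu0]; ring
    · have := coeff_mul_single (l2 * l4) w k 0 hPz (by omega)
      rw [Nat.add_zero] at this
      rw [hv7', this, hival, hw0]; ring
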